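/- arXiv:0910.1968 — 4 statements merged into one kernel-verified Lean document; each statement's English description precedes it below -/
import Mathlib

section
/- Let A, B, C, D, E, F be unital C*-algebras, with unital *-homomorphisms φ_A : A → D, φ_B : B → D, ψ_B : B → E, ψ_C : C → E, ι_D : D → F, ι_E : E → F satisfying ι_D ∘ φ_B = ι_E ∘ ψ_B. Let d₀ ∈ D and e₀ ∈ E with ‖d₀‖ = 1 = ‖e₀‖, and set f₀ = ι_D(d₀)·ι_E(e₀); assume f₀ ≠ 0. Define N_D(a,b) = ‖φ_A(a)·d₀ − d₀·φ_B(b)‖_D, N_E(b,c) = ‖ψ_B(b)·e₀ − e₀·ψ_C(c)‖_E, and N_F(a,c) = ‖ι_D(φ_A(a))·f₀ − f₀·ι_E(ψ_C(c))‖_F. Let L_A : A → ℝ, L_B : B → ℝ, L_C : C → ℝ be nonnegative functions, and let γ_D, γ_E > 0. Assume: (i) for every self-adjoint a ∈ A and every ε > 0 there is a self-adjoint b ∈ B with L_B(b) ≤ L_A(a) + ε and N_D(a,b) ≤ γ_D·(L_A(a) + ε), and for every self-adjoint b ∈ B and every ε > 0 there is a self-adjoint a ∈ A with L_A(a) ≤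 L_B(b) + ε and N_D(a,b) ≤ γ_D·(L_B(b) + ε); (ii) the analogous two conditions hold between B and C for N_E with constant γ_E. Then for every γ ≥ γ_D + γ_E: for every self-adjoint a ∈ A and every ε > 0 there is a self-adjoint c ∈ C with L_C(c) ≤ L_A(a) + ε and N_F(a,c) ≤ γ·(L_A(a) + ε); and for every self-adjoint c ∈ C and every ε > 0 there is a self-adjoint a ∈ A with L_A(a) ≤ L_C(c) + ε and N_F(a,c) ≤ γ·(L_C(c) + ε). -/
private lemma bridge_key {B D E F : Type*}
    [NormedRing B] [StarRing B] [CStarRing B] [NormedAlgebra ℂ B] [StarModule ℂ B] [CompleteSpace B]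
    [NormedRing D] [StarRing D] [CStarRing D] [NormedAlgebra ℂ D] [StarModule ℂ D] [CompleteSpace D]
    [NormedRing E] [StarRing E] [CStarRing E] [NormedAlgebra ℂ E] [StarModule ℂ E] [CompleteSpace E]
    [NormedRing F] [StarRing F] [CStarRing F] [NormedAlgebra ℂ F] [StarModule ℂ F] [CompleteSpace F]
    (φB : B →⋆ₐ[ℂ] D) (ψB : B →⋆ₐ[ℂ] E)
    (ιD : D →⋆ₐ[ℂ] F) (ιE : E →⋆ₐ[ℂ] F)
    (hamalg : ∀ b : B, ιD (φB b) = ιE (ψB b))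
    (d₀ x : D) (e₀ y : E) (b : B) (hd₀ : ‖d₀‖ = 1) (he₀ : ‖e₀‖ = 1) :
    ‖ιD x * (ιD d₀ * ιE e₀) - (ιD d₀ * ιE e₀) * ιE y‖ ≤
      ‖x * d₀ - d₀ * φB b‖ + ‖ψB b * e₀ - e₀ * y‖ := by
  letI : CStarAlgebra B := ⟨⟩
  letI : CStarAlgebra D := ⟨⟩
  letI : CStarAlgebra E := ⟨⟩
  letI : CStarAlgebra F := ⟨⟩
  have hid : ιD x * (ιD d₀ * ιE e₀) - (ιD d₀ * ιE e₀) * ιE y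
      = ιD (x * d₀ - d₀ * φB b) * ιE e₀ + ιD d₀ * ιE (ψB b * e₀ - e₀ * y) := by
    simp only [map_sub, map_mul, hamalg]
    noncomm_ring
  have h1 : ‖ιD (x * d₀ - d₀ * φB b)‖ ≤ ‖x * d₀ - d₀ * φB b‖ :=
    NonUnitalStarAlgHom.norm_apply_le ιD _
  have h2 : ‖ιE (ψB b * e₀ - e₀ * y)‖ ≤ ‖ψB b * e₀ - e₀ * y‖ :=
    NonUnitalStarAlgHom.norm_apply_le ιE _
  have h3 : ‖ιE e₀‖ ≤ 1 := he₀ ▸ NonUnitalStarAlgHom.norm_apply_le ιE e₀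
  have h4 : ‖ιD d₀‖ ≤ 1 := hd₀ ▸ NonUnitalStarAlgHom.norm_apply_le ιD d₀
  calc ‖ιD x * (ιD d₀ * ιE e₀) - (ιD d₀ * ιE e₀) * ιE y‖
      ≤ ‖ιD (x * d₀ - d₀ * φB b) * ιE e₀‖ + ‖ιD d₀ * ιE (ψB b * e₀ - e₀ * y)‖ := by
        rw [hid]; exact norm_add_le _ _
    _ ≤ ‖ιD (x * d₀ - d₀ * φB b)‖ * ‖ιE e₀‖ + ‖ιD d₀‖ * ‖ιE (ψB b * e₀ - e₀ * y)‖ :=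
        add_le_add (norm_mul_le _ _) (norm_mul_le _ _)
    _ ≤ ‖x * d₀ - d₀ * φB b‖ * 1 + 1 * ‖ψB b * e₀ - e₀ * y‖ :=
        add_le_add (mul_le_mul h1 h3 (norm_nonneg _) (norm_nonneg _))
          (mul_le_mul h4 h2 (norm_nonneg _) zero_le_one)
    _ = ‖x * d₀ - d₀ * φB b‖ + ‖ψB b * e₀ - e₀ * y‖ := by ring

/-- Theorem 2.1: Given unital C*-algebras `A, B, C, D, E, F` with
unital *-homomorphisms `φA : A → D`, `φB : B → D`, `ψB : B → E`, `ψC : C → E`,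
`ιD : D → F`, `ιE : E → F` with `ιD ∘ φB = ιE ∘ ψB`, distinguished elements
`d₀ ∈ D`, `e₀ ∈ E` of norm one with `f₀ = ιD(d₀)·ιE(e₀) ≠ 0`, nonnegative
functions `L_A, L_B, L_C` and constants `γD, γE > 0` such that `γD⁻¹·N_D` is a
bridge for `(L_A, L_B)` and `γE⁻¹·N_E` is a bridge for `(L_B, L_C)` (in the sense
of the two-sided approximation property), then for every `γ ≥ γD + γE` the
seminorm `γ⁻¹·N_F` satisfies the two-sided approximation property for
`(L_A, L_C)`. -/
theorem stmt1 {A B C D E F : Type*}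
    [NormedRing A] [StarRing A] [CStarRing A] [NormedAlgebra ℂ A] [StarModule ℂ A] [CompleteSpace A]
    [NormedRing B] [StarRing B] [CStarRing B] [NormedAlgebra ℂ B] [StarModule ℂ B] [CompleteSpace B]
    [NormedRing C] [StarRing C] [CStarRing C] [NormedAlgebra ℂ C] [StarModule ℂ C] [CompleteSpace C]
    [NormedRing D] [StarRing D] [CStarRing D] [NormedAlgebra ℂ D] [StarModule ℂ D] [CompleteSpace D]
    [NormedRing E] [StarRing E] [CStarRing E] [NormedAlgebra ℂ E] [StarModule ℂ E] [CompleteSpace E]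
    [NormedRing F] [StarRing F] [CStarRing F] [NormedAlgebra ℂ F] [StarModule ℂ F] [CompleteSpace F]
    (φA : A →⋆ₐ[ℂ] D) (φB : B →⋆ₐ[ℂ] D) (ψB : B →⋆ₐ[ℂ] E) (ψC : C →⋆ₐ[ℂ] E)
    (ιD : D →⋆ₐ[ℂ] F) (ιE : E →⋆ₐ[ℂ] F)
    (hamalg : ∀ b : B, ιD (φB b) = ιE (ψB b))
    (d₀ : D) (e₀ : E) (hd₀ : ‖d₀‖ = 1) (he₀ : ‖e₀‖ = 1)
    (hf₀ : ιD d₀ * ιE e₀ ≠ 0)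
    (LA : A → ℝ) (LB : B → ℝ) (LC : C → ℝ)
    (hLA : ∀ a, 0 ≤ LA a) (hLB : ∀ b, 0 ≤ LB b) (hLC : ∀ c, 0 ≤ LC c)
    (γD γE : ℝ) (hγD : 0 < γD) (hγE : 0 < γE)
    (hD₁ : ∀ a : A, IsSelfAdjoint a → ∀ ε : ℝ, 0 < ε → ∃ b : B, IsSelfAdjoint b ∧
      LB b ≤ LA a + ε ∧ ‖φA a * d₀ - d₀ * φB b‖ ≤ γD * (LA a + ε))
    (hD₂ : ∀ b : B, IsSelfAdjoint b → ∀ ε : ℝ, 0 < ε → ∃ a : A, IsSelfAdjoint a ∧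
      LA a ≤ LB b + ε ∧ ‖φA a * d₀ - d₀ * φB b‖ ≤ γD * (LB b + ε))
    (hE₁ : ∀ b : B, IsSelfAdjoint b → ∀ ε : ℝ, 0 < ε → ∃ c : C, IsSelfAdjoint c ∧
      LC c ≤ LB b + ε ∧ ‖ψB b * e₀ - e₀ * ψC c‖ ≤ γE * (LB b + ε))
    (hE₂ : ∀ c : C, IsSelfAdjoint c → ∀ ε : ℝ, 0 < ε → ∃ b : B, IsSelfAdjoint b ∧
      LB b ≤ LC c + ε ∧ ‖ψB b * e₀ - e₀ * ψC c‖ ≤ γE * (LC c + ε)) :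
    ∀ γ : ℝ, γD + γE ≤ γ →
      (∀ a : A, IsSelfAdjoint a → ∀ ε : ℝ, 0 < ε → ∃ c : C, IsSelfAdjoint c ∧
        LC c ≤ LA a + ε ∧
        ‖ιD (φA a) * (ιD d₀ * ιE e₀) - (ιD d₀ * ιE e₀) * ιE (ψC c)‖ ≤ γ * (LA a + ε)) ∧
      (∀ c : C, IsSelfAdjoint c → ∀ ε : ℝ, 0 < ε → ∃ a : A, IsSelfAdjoint a ∧
        LA a ≤ LC c + ε ∧
        ‖ιD (φA a) * (ιD d₀ * ιE e₀) - (ιD d₀ * ιE e₀) * ιE (ψC c)‖ ≤ γ * (LC c + ε)) := by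
  intro γ hγ
  constructor
  · intro a ha ε hε
    obtain ⟨b, hb, hLb, hNb⟩ := hD₁ a ha (ε / 2) (by linarith)
    obtain ⟨c, hc, hLc, hNc⟩ := hE₁ b hb (ε / 2) (by linarith)
    refine ⟨c, hc, by linarith, ?_⟩
    have key := bridge_key φB ψB ιD ιE hamalg d₀ (φA a) e₀ (ψC c) b hd₀ he₀
    have h1 : γD * (LA a + ε / 2) ≤ γD * (LA a + ε) := by nlinarith
    have h2 : γE * (LB b + ε / 2) ≤ γE * (LA a + ε) := by nlinarith
    have h3 : (γD + γE) * (LA a + ε) ≤ γ * (LA a + ε) := by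
      have := hLA a; nlinarith
    nlinarith [key]
  · intro c hc ε hε
    obtain ⟨b, hb, hLb, hNb⟩ := hE₂ c hc (ε / 2) (by linarith)
    obtain ⟨a, ha, hLa, hNa⟩ := hD₂ b hb (ε / 2) (by linarith)
    refine ⟨a, ha, by linarith, ?_⟩
    have key := bridge_key φB ψB ιD ιE hamalg d₀ (φA a) e₀ (ψC c) b hd₀ he₀
    have h1 : γD * (LB b + ε / 2) ≤ γD * (LC c + ε) := by nlinarith
    have h2 : γE * (LC c + ε / 2) ≤ γE * (LC c + ε) := by nlinarith
    have h3 : (γD + γE) * (LC c + ε) ≤ γ * (LC c + ε) := by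
      have := hLC c; nlinarith
    nlinarith [key]
end

section
/- Let A, B, C, D, E, F be unital C*-algebras, with unital *-homomorphisms φ_A : A → D, φ_B : B → D, ψ_B : B → E, ψ_C : C → E, ι_D : D → F, ι_E : E → F satisfying ι_D ∘ φ_B = ι_E ∘ ψ_B. Let d₀ ∈ D and e₀ ∈ E with ‖d₀‖ = 1 = ‖e₀‖, and set f₀ = ι_D(d₀)·ι_E(e₀). Define N_D(a,b) = ‖φ_A(a)·d₀ − d₀·φ_B(b)‖_D, N_E(b,c) = ‖ψ_B(b)·e₀ − e₀·ψ_C(c)‖_E, and N_F(a,c) = ‖ι_D(φ_A(a))·f₀ − f₀·ι_E(ψ_C(c))‖_F. Let L_A : A → ℝ, L_B : B → ℝ, L_C : C → ℝ be nonnegative functions and γ_D, γ_E > 0. Assume: for every self-adjoint a ∈ A and every ε > 0 there is a self-adjoint b ∈ B with L_B(b) ≤ L_A(a) + ε and N_D(a,b) ≤ γ_D·(L_A(a) + ε); and for every self-adjoint b ∈ B and every ε > 0 there is a self-adjoint c ∈ C with L_C(c) ≤ L_B(b) + ε and N_E(b,c) ≤ γ_E·(L_B(b) + ε). Then for every self-adjoint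 a ∈ A and every ε > 0 there exists a self-adjoint c ∈ C such that L_C(c) ≤ L_A(a) + 2ε and N_F(a,c) ≤ (γ_D + γ_E)·L_A(a) + ε·(γ_D + 2γ_E). -/
lemma stmt2_aux {X Y : Type*}
    [NormedRing X] [StarRing X] [CStarRing X] [NormedAlgebra ℂ X] [StarModule ℂ X] [CompleteSpace X]
    [NormedRing Y] [StarRing Y] [CStarRing Y] [NormedAlgebra ℂ Y] [StarModule ℂ Y] [CompleteSpace Y]
    (f : X →⋆ₐ[ℂ] Y) (x : X) : ‖f x‖ ≤ ‖x‖ := by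
  letI : CStarAlgebra X := {}
  letI : CStarAlgebra Y := {}
  exact NonUnitalStarAlgHom.norm_apply_le f x

/-- The quantitative estimate from the proof of Theorem 2.1.  With
unital C*-algebras `A, B, C, D, E, F`, unital *-homomorphisms as indicated with
`ιD ∘ φB = ιE ∘ ψB`, distinguished norm-one elements `d₀ ∈ D`, `e₀ ∈ E`, and
`f₀ = ιD(d₀)·ιE(e₀)`: if for every self-adjoint `a ∈ A` and `ε > 0` there is a
self-adjoint `b ∈ B` with `L_B(b) ≤ L_A(a) + ε` and `N_D(a,b) ≤ γD·(L_A(a)+ε)`,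
and for every self-adjoint `b ∈ B` and `ε > 0` there is a self-adjoint `c ∈ C`
with `L_C(c) ≤ L_B(b) + ε` and `N_E(b,c) ≤ γE·(L_B(b)+ε)`, then for every
self-adjoint `a ∈ A` and `ε > 0` there is a self-adjoint `c ∈ C` with
`L_C(c) ≤ L_A(a) + 2ε` and `N_F(a,c) ≤ (γD+γE)·L_A(a) + ε·(γD+2γE)`. -/
theorem stmt2 {A B C D E F : Type*}
    [NormedRing A] [StarRing A] [CStarRing A] [NormedAlgebra ℂ A] [StarModule ℂ A] [CompleteSpace A]
    [NormedRing B] [StarRing B] [CStarRing B] [NormedAlgebra ℂ B] [StarModule ℂ B] [CompleteSpace B]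
    [NormedRing C] [StarRing C] [CStarRing C] [NormedAlgebra ℂ C] [StarModule ℂ C] [CompleteSpace C]
    [NormedRing D] [StarRing D] [CStarRing D] [NormedAlgebra ℂ D] [StarModule ℂ D] [CompleteSpace D]
    [NormedRing E] [StarRing E] [CStarRing E] [NormedAlgebra ℂ E] [StarModule ℂ E] [CompleteSpace E]
    [NormedRing F] [StarRing F] [CStarRing F] [NormedAlgebra ℂ F] [StarModule ℂ F] [CompleteSpace F]
    (φA : A →⋆ₐ[ℂ] D) (φB : B →⋆ₐ[ℂ] D) (ψB : B →⋆ₐ[ℂ] E) (ψC : C →⋆ₐ[ℂ] E)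
    (ιD : D →⋆ₐ[ℂ] F) (ιE : E →⋆ₐ[ℂ] F)
    (hamalg : ∀ b : B, ιD (φB b) = ιE (ψB b))
    (d₀ : D) (e₀ : E) (hd₀ : ‖d₀‖ = 1) (he₀ : ‖e₀‖ = 1)
    (LA : A → ℝ) (LB : B → ℝ) (LC : C → ℝ)
    (hLA : ∀ a, 0 ≤ LA a) (hLB : ∀ b, 0 ≤ LB b) (hLC : ∀ c, 0 ≤ LC c)
    (γD γE : ℝ) (hγD : 0 < γD) (hγE : 0 < γE)
    (hD₁ : ∀ a : A, IsSelfAdjoint a → ∀ ε : ℝ, 0 < ε → ∃ b : B, IsSelfAdjoint b ∧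
      LB b ≤ LA a + ε ∧ ‖φA a * d₀ - d₀ * φB b‖ ≤ γD * (LA a + ε))
    (hE₁ : ∀ b : B, IsSelfAdjoint b → ∀ ε : ℝ, 0 < ε → ∃ c : C, IsSelfAdjoint c ∧
      LC c ≤ LB b + ε ∧ ‖ψB b * e₀ - e₀ * ψC c‖ ≤ γE * (LB b + ε)) :
    ∀ a : A, IsSelfAdjoint a → ∀ ε : ℝ, 0 < ε → ∃ c : C, IsSelfAdjoint c ∧
      LC c ≤ LA a + 2 * ε ∧
      ‖ιD (φA a) * (ιD d₀ * ιE e₀) - (ιD d₀ * ιE e₀) * ιE (ψC c)‖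
        ≤ (γD + γE) * LA a + ε * (γD + 2 * γE) := by
  intro a ha ε hε
  obtain ⟨b, hb, hLb, hNb⟩ := hD₁ a ha ε hε
  obtain ⟨c, hc, hLc, hNc⟩ := hE₁ b hb ε hε
  refine ⟨c, hc, by linarith, ?_⟩
  have key : ιD (φA a) * (ιD d₀ * ιE e₀) - (ιD d₀ * ιE e₀) * ιE (ψC c)
      = ιD (φA a * d₀ - d₀ * φB b) * ιE e₀ + ιD d₀ * ιE (ψB b * e₀ - e₀ * ψC c) := by
    simp only [map_sub, map_mul, hamalg b]
    noncomm_ring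
  rw [key]
  have h1 : ‖ιD (φA a * d₀ - d₀ * φB b) * ιE e₀‖ ≤ γD * (LA a + ε) := by
    calc ‖ιD (φA a * d₀ - d₀ * φB b) * ιE e₀‖
        ≤ ‖ιD (φA a * d₀ - d₀ * φB b)‖ * ‖ιE e₀‖ := norm_mul_le _ _
      _ ≤ ‖φA a * d₀ - d₀ * φB b‖ * ‖e₀‖ := by
          gcongr <;> exact stmt2_aux _ _
      _ ≤ γD * (LA a + ε) := by rw [he₀, mul_one]; exact hNb
  have h2 : ‖ιD d₀ * ιE (ψB b * e₀ - e₀ * ψC c)‖ ≤ γE * (LB b + ε) := by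
    calc ‖ιD d₀ * ιE (ψB b * e₀ - e₀ * ψC c)‖
        ≤ ‖ιD d₀‖ * ‖ιE (ψB b * e₀ - e₀ * ψC c)‖ := norm_mul_le _ _
      _ ≤ ‖d₀‖ * ‖ψB b * e₀ - e₀ * ψC c‖ := by
          gcongr <;> exact stmt2_aux _ _
      _ ≤ γE * (LB b + ε) := by rw [hd₀, one_mul]; exact hNc
  calc ‖ιD (φA a * d₀ - d₀ * φB b) * ιE e₀ + ιD d₀ * ιE (ψB b * e₀ - e₀ * ψC c)‖
      ≤ ‖ιD (φA a * d₀ - d₀ * φB b) * ιE e₀‖ + ‖ιD d₀ * ιE (ψB b * e₀ - e₀ * ψC c)‖ :=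
        norm_add_le _ _
    _ ≤ γD * (LA a + ε) + γE * (LB b + ε) := add_le_add h1 h2
    _ ≤ γD * (LA a + ε) + γE * (LA a + 2 * ε) := by nlinarith
    _ = (γD + γE) * LA a + ε * (γD + 2 * γE) := by ring
end

section
/- Let H be a finite-dimensional complex inner product space, let Q be a rank-one orthogonal projection on H (a self-adjoint idempotent of trace 1), and let A and B be operators on H. Then |tr(Q ∘ A) − tr(Q ∘ B)| ≤ ‖Q ∘ A − B ∘ Q‖, where ‖·‖ denotes the operator norm. -/
open scoped InnerProductSpace

section Aux

variable {H : Type*} [NormedAddCommGroup H] [InnerProductSpace ℂ H] [FiniteDimensional ℂ H]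

/-- Trace of `Q ∘ X` where `Q y = ⟪e,y⟫ • e`. -/
lemma trace_comp_rankOne (e : H) (X : H →L[ℂ] H)
    (Q : H →L[ℂ] H) (hQ : ∀ y, Q y = ⟪e, y⟫_ℂ • e) :
    LinearMap.trace ℂ H ((Q ∘L X : H →L[ℂ] H) : H →ₗ[ℂ] H) = ⟪e, X e⟫_ℂ := by
  have key : ((Q ∘L X : H →L[ℂ] H) : H →ₗ[ℂ] H)
      = dualTensorHom ℂ H H ((((innerSL ℂ e).comp X : H →L[ℂ] ℂ) : H →ₗ[ℂ] ℂ) ⊗ₜ[ℂ] e) := by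
    ext y
    simp [hQ (X y)]
  rw [key, LinearMap.trace_eq_contract_apply]
  simp

end Aux

/-- For a rank-one orthogonal projection `Q` (a self-adjoint idempotent
of trace 1) on a finite-dimensional complex inner product space `H`, and operators
`A, B` on `H`, one has `|tr(Q∘A) − tr(Q∘B)| ≤ ‖Q∘A − B∘Q‖` (operator norm). -/
theorem stmt4 {H : Type*}
    [NormedAddCommGroup H] [InnerProductSpace ℂ H] [FiniteDimensional ℂ H]
    (Q A B : H →L[ℂ] H) (hQsa : IsSelfAdjoint Q) (hQidem : Q ∘L Q = Q)
    (hQtr : LinearMap.trace ℂ H (Q : H →ₗ[ℂ] H) = 1) :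
    ‖LinearMap.trace ℂ H ((Q ∘L A : H →L[ℂ] H) : H →ₗ[ℂ] H)
      - LinearMap.trace ℂ H ((Q ∘L B : H →L[ℂ] H) : H →ₗ[ℂ] H)‖
      ≤ ‖Q ∘L A - B ∘L Q‖ := by
  have hidem : ∀ x, Q (Q x) = Q x := fun x => congrFun (congrArg DFunLike.coe hQidem) x
  -- `Q` is a projection onto its range
  have hproj : LinearMap.IsProj (LinearMap.range (Q : H →ₗ[ℂ] H)) (Q : H →ₗ[ℂ] H) := by
    refine ⟨fun x => LinearMap.mem_range_self _ x, ?_⟩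
    rintro x ⟨y, rfl⟩
    exact hidem y
  -- the range has dimension 1
  have hrank : Module.finrank ℂ (LinearMap.range (Q : H →ₗ[ℂ] H)) = 1 := by
    have := hproj.trace
    rw [hQtr] at this
    exact_mod_cast this.symm
  -- get a unit vector spanning the range
  obtain ⟨v, hv0, hv⟩ := finrank_eq_one_iff'.mp hrank
  set e : H := ((‖(v : H)‖ : ℂ))⁻¹ • (v : H) with he_def
  have hv0' : (v : H) ≠ 0 := fun h => hv0 (Subtype.ext h)
  have hne : ‖(v : H)‖ ≠ 0 := norm_ne_zero_iff.mpr hv0'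
  have he_norm : ‖e‖ = 1 := by
    rw [he_def, norm_smul, norm_inv]
    simp [inv_mul_cancel₀ hne]
  have he_mem : e ∈ LinearMap.range (Q : H →ₗ[ℂ] H) :=
    Submodule.smul_mem _ _ v.2
  -- every element of the range is a multiple of `e`
  have hspan : ∀ x ∈ LinearMap.range (Q : H →ₗ[ℂ] H), ∃ c : ℂ, x = c • e := by
    intro x hx
    obtain ⟨c, hc⟩ := hv ⟨x, hx⟩
    refine ⟨c * ‖(v : H)‖, ?_⟩
    have hcx : c • (v : H) = x := congrArg Subtype.val hc
    rw [← hcx, he_def, smul_smul]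
    congr 1
    have hne' : ((‖(v : H)‖ : ℂ)) ≠ 0 := by exact_mod_cast hne
    rw [mul_assoc, mul_inv_cancel₀ hne', mul_one]
  -- `Q e = e`
  have hQe : Q e = e := by
    obtain ⟨y, hy⟩ := he_mem
    rw [← hy]
    exact hidem y
  have hsym : ∀ x y, ⟪Q x, y⟫_ℂ = ⟪x, Q y⟫_ℂ := fun x y => hQsa.isSymmetric x y
  -- `Q` is the rank-one projection onto `ℂ • e`
  have hQform : ∀ y, Q y = ⟪e, y⟫_ℂ • e := by
    intro y
    obtain ⟨c, hc⟩ := hspan (Q y) (LinearMap.mem_range_self _ y)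
    have hee : ⟪e, e⟫_ℂ = 1 := by
      rw [inner_self_eq_norm_sq_to_K, he_norm]
      norm_num
    have hc' : ⟪e, Q y⟫_ℂ = c := by
      rw [hc, inner_smul_right, hee, mul_one]
    have : ⟪e, Q y⟫_ℂ = ⟪e, y⟫_ℂ := by
      rw [← hsym e y, hQe]
    rw [hc, ← hc', this]
  -- compute the traces
  rw [trace_comp_rankOne e A Q hQform, trace_comp_rankOne e B Q hQform]
  have key : ⟪e, A e⟫_ℂ - ⟪e, B e⟫_ℂ = ⟪e, (Q ∘L A - B ∘L Q) e⟫_ℂ := by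
    simp only [ContinuousLinearMap.sub_apply, ContinuousLinearMap.comp_apply, inner_sub_right,
      hQe]
    rw [← hsym e (A e), hQe]
  rw [key]
  calc ‖⟪e, (Q ∘L A - B ∘L Q) e⟫_ℂ‖ ≤ ‖e‖ * ‖(Q ∘L A - B ∘L Q) e‖ :=
        norm_inner_le_norm _ _
    _ ≤ ‖e‖ * (‖Q ∘L A - B ∘L Q‖ * ‖e‖) := by
        exact mul_le_mul_of_nonneg_left ((Q ∘L A - B ∘L Q).le_opNorm e) (norm_nonneg _)
    _ = ‖Q ∘L A - B ∘L Q‖ := by rw [he_norm]; ring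
end

section
/- Let H₁ and H₂ be finite-dimensional complex inner product spaces, let P₁ be a rank-one orthogonal projection on H₁ and P₂ a rank-one orthogonal projection on H₂, and let S be an operator on H₁ and T an operator on H₂. Then |tr(P₁ ∘ S) − tr(P₂ ∘ T)| ≤ ‖(P₁ ⊗ P₂) ∘ (S ⊗ I_{H₂}) − (I_{H₁} ⊗ T) ∘ (P₁ ⊗ P₂)‖, where ‖·‖ denotes the operator norm on H₁ ⊗ H₂. -/
open scoped ComplexInnerProductSpace

lemma aux_rank_one {H : Type*} [NormedAddCommGroup H] [InnerProductSpace ℂ H]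
    [FiniteDimensional ℂ H] (P : H →L[ℂ] H)
    (hsa : IsSelfAdjoint P) (hidem : P ∘L P = P)
    (htr : LinearMap.trace ℂ H (P : H →ₗ[ℂ] H) = 1) :
    ∃ e : H, ‖e‖ = 1 ∧ ∀ x, P x = ⟪e, x⟫ • e := by
  have hfix : ∀ y ∈ LinearMap.range (P : H →ₗ[ℂ] H), P y = y := by
    rintro y ⟨z, rfl⟩
    have := congrArg (fun A => A z) hidem
    simpa using this
  have hproj : LinearMap.IsProj (LinearMap.range (P : H →ₗ[ℂ] H)) (P : H →ₗ[ℂ] H) :=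
    ⟨fun x => LinearMap.mem_range_self _ x, hfix⟩
  have htr' := hproj.trace
  rw [htr] at htr'
  have hrk : Module.finrank ℂ (LinearMap.range (P : H →ₗ[ℂ] H)) = 1 := by
    have := htr'.symm
    exact_mod_cast this
  rw [finrank_eq_one_iff'] at hrk
  obtain ⟨v, hv0, hv⟩ := hrk
  have hv0' : (v : H) ≠ 0 := fun h => hv0 (Subtype.ext h)
  set e : H := (‖(v : H)‖ : ℂ)⁻¹ • (v : H) with he_def
  have hne : ‖(v : H)‖ ≠ 0 := norm_ne_zero_iff.mpr hv0'
  have hnorm : ‖e‖ = 1 := by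
    rw [he_def, norm_smul]
    simp [norm_inv, hne]
  have hee : ⟪e, e⟫ = 1 := by
    rw [inner_self_eq_norm_sq_to_K, hnorm]; norm_num
  refine ⟨e, hnorm, fun x => ?_⟩
  -- P x is a multiple of e
  obtain ⟨c, hc⟩ := hv ⟨P x, LinearMap.mem_range_self _ x⟩
  have hc' : P x = c • (v : H) := by
    have := congrArg (Subtype.val) hc
    simpa using this.symm
  have hPx : P x = (c * ‖(v : H)‖) • e := by
    rw [hc', he_def, smul_smul]
    congr 1
    rw [mul_assoc, mul_inv_cancel₀ (by exact_mod_cast hne), mul_one]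
  -- compute the coefficient
  have hmem : e ∈ LinearMap.range (P : H →ₗ[ℂ] H) :=
    Submodule.smul_mem _ _ v.2
  have hPe : P e = e := hfix e hmem
  have hcoef : ⟪e, P x⟫ = ⟪e, x⟫ := by
    have hadj : ContinuousLinearMap.adjoint P = P :=
      ContinuousLinearMap.isSelfAdjoint_iff'.mp hsa
    calc ⟪e, P x⟫ = ⟪ContinuousLinearMap.adjoint P e, x⟫ := by
          rw [ContinuousLinearMap.adjoint_inner_left]
      _ = ⟪e, x⟫ := by rw [hadj, hPe]
  have : ⟪e, P x⟫ = c * ‖(v : H)‖ := by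
    rw [hPx, inner_smul_right, hee, mul_one]
  rw [hPx, ← this, hcoef]

lemma aux_trace {H : Type*} [NormedAddCommGroup H] [InnerProductSpace ℂ H]
    [FiniteDimensional ℂ H] (P S : H →L[ℂ] H) (e : H)
    (hP : ∀ x, P x = ⟪e, x⟫ • e) :
    LinearMap.trace ℂ H ((P ∘L S : H →L[ℂ] H) : H →ₗ[ℂ] H) = ⟪e, S e⟫ := by
  set φ : H →ₗ[ℂ] ℂ :=
    { toFun := fun x => ⟪e, S x⟫
      map_add' := fun x y => by simp [inner_add_right]
      map_smul' := fun c x => by simp [inner_smul_right] }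
  have hdecomp : ((P ∘L S : H →L[ℂ] H) : H →ₗ[ℂ] H)
      = (LinearMap.toSpanSingleton ℂ H e) ∘ₗ φ := by
    ext x
    simp [φ, hP, LinearMap.toSpanSingleton_apply]
  rw [hdecomp, LinearMap.trace_comp_comm']
  set g : ℂ →ₗ[ℂ] ℂ := φ ∘ₗ LinearMap.toSpanSingleton ℂ H e
  have hg : g = g 1 • LinearMap.id := by
    refine LinearMap.ext fun x => ?_
    have : g x = x * g 1 := by
      have : x • (1 : ℂ) = x := by simp
      rw [← this, map_smul]; simp [smul_eq_mul, mul_comm]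
    simpa [smul_eq_mul, mul_comm] using this
  rw [hg, map_smul, LinearMap.trace_id]
  simp [g, φ, LinearMap.toSpanSingleton_apply]


/-- Let `H₁, H₂` be finite-dimensional complex inner product spaces,
`P₁, P₂` rank-one orthogonal projections (self-adjoint idempotents of trace 1) on
`H₁, H₂`, and `S, T` operators on `H₁, H₂`.  Then
`|tr(P₁∘S) − tr(P₂∘T)| ≤ ‖(P₁⊗P₂)∘(S⊗I) − (I⊗T)∘(P₁⊗P₂)‖`
(operator norm on `H₁ ⊗ H₂`).

Since Mathlib has no inner-product-space instance on `TensorProduct`, the Hilbert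
space tensor product `H₁ ⊗ H₂` is encoded as a finite-dimensional inner product
space `K` together with a bilinear map `tmul` whose image spans `K` and whose
inner products multiply (`⟪x⊗y, x'⊗y'⟫ = ⟪x,x'⟫·⟪y,y'⟫`); the operators
`P₁ ⊗ P₂`, `S ⊗ I` and `I ⊗ T` are the (unique) operators `PP`, `SI`, `IT` on `K`
determined by their values on elementary tensors. -/
theorem stmt6 {H₁ H₂ K : Type*}
    [NormedAddCommGroup H₁] [InnerProductSpace ℂ H₁] [FiniteDimensional ℂ H₁]
    [NormedAddCommGroup H₂] [InnerProductSpace ℂ H₂] [FiniteDimensional ℂ H₂]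
    [NormedAddCommGroup K] [InnerProductSpace ℂ K] [FiniteDimensional ℂ K]
    (tmul : H₁ →ₗ[ℂ] H₂ →ₗ[ℂ] K)
    (htmul_inner : ∀ (x x' : H₁) (y y' : H₂),
      ⟪tmul x y, tmul x' y'⟫ = ⟪x, x'⟫ * ⟪y, y'⟫)
    (htmul_span : Submodule.span ℂ {z : K | ∃ x y, tmul x y = z} = ⊤)
    (P₁ S : H₁ →L[ℂ] H₁) (P₂ T : H₂ →L[ℂ] H₂)
    (hP₁sa : IsSelfAdjoint P₁) (hP₁idem : P₁ ∘L P₁ = P₁)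
    (hP₁tr : LinearMap.trace ℂ H₁ (P₁ : H₁ →ₗ[ℂ] H₁) = 1)
    (hP₂sa : IsSelfAdjoint P₂) (hP₂idem : P₂ ∘L P₂ = P₂)
    (hP₂tr : LinearMap.trace ℂ H₂ (P₂ : H₂ →ₗ[ℂ] H₂) = 1)
    (PP SI IT : K →L[ℂ] K)
    (hPP : ∀ x y, PP (tmul x y) = tmul (P₁ x) (P₂ y))
    (hSI : ∀ x y, SI (tmul x y) = tmul (S x) y)
    (hIT : ∀ x y, IT (tmul x y) = tmul x (T y)) :
    ‖LinearMap.trace ℂ H₁ ((P₁ ∘L S : H₁ →L[ℂ] H₁) : H₁ →ₗ[ℂ] H₁)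
      - LinearMap.trace ℂ H₂ ((P₂ ∘L T : H₂ →L[ℂ] H₂) : H₂ →ₗ[ℂ] H₂)‖
      ≤ ‖PP ∘L SI - IT ∘L PP‖ := by

  obtain ⟨e, he, hPe⟩ := aux_rank_one P₁ hP₁sa hP₁idem hP₁tr
  obtain ⟨f, hf, hPf⟩ := aux_rank_one P₂ hP₂sa hP₂idem hP₂tr
  have hee : ⟪e, e⟫ = 1 := by rw [inner_self_eq_norm_sq_to_K, he]; norm_num
  have hff : ⟪f, f⟫ = 1 := by rw [inner_self_eq_norm_sq_to_K, hf]; norm_num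
  rw [aux_trace P₁ S e hPe, aux_trace P₂ T f hPf]
  set u : K := tmul e f with hu_def
  set A : K →L[ℂ] K := PP ∘L SI - IT ∘L PP with hA_def
  have hu : ‖u‖ = 1 := by
    have h0 : ⟪u, u⟫ = 1 := by rw [hu_def, htmul_inner, hee, hff, mul_one]
    have h1 := inner_self_eq_norm_sq_to_K (𝕜 := ℂ) u
    rw [h0] at h1
    rw [← RCLike.ofReal_pow] at h1
    have : (‖u‖ : ℝ) ^ 2 = 1 := by
      have := h1.symm
      rw [show (1 : ℂ) = ((1 : ℝ) : ℂ) by norm_num] at this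
      exact RCLike.ofReal_inj.mp this
    nlinarith [norm_nonneg u]
  have hP1e : P₁ e = e := by rw [hPe, hee, one_smul]
  have hP2f : P₂ f = f := by rw [hPf, hff, one_smul]
  have hAu : A u = ⟪e, S e⟫ • tmul e f - tmul e (T f) := by
    have h1 : PP (SI u) = ⟪e, S e⟫ • tmul e f := by
      rw [hu_def, hSI, hPP, hP2f, hPe, map_smul, LinearMap.smul_apply]
    have h2 : IT (PP u) = tmul e (T f) := by
      rw [hu_def, hPP, hP1e, hP2f, hIT]
    simp [hA_def, h1, h2]
  have hinner : ⟪u, A u⟫ = ⟪e, S e⟫ - ⟪f, T f⟫ := by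
    rw [hAu, inner_sub_right, inner_smul_right, hu_def, htmul_inner, htmul_inner,
      hee, hff]
    ring
  calc ‖⟪e, S e⟫ - ⟪f, T f⟫‖ = ‖⟪u, A u⟫‖ := by rw [hinner]
    _ ≤ ‖u‖ * ‖A u‖ := norm_inner_le_norm u (A u)
    _ ≤ ‖u‖ * (‖A‖ * ‖u‖) := by
        exact mul_le_mul_of_nonneg_left (A.le_opNorm u) (norm_nonneg u)
    _ = ‖A‖ := by rw [hu]; ring
end
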